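/- Jacobi triple product in the form: for 0 < q < 1 and y ≠ 0 complex, (q²;q²)_∞ (qy;q²)_∞ (q/y;q²)_∞ = ∑_{n=-∞}^∞ (-1)^n q^{n²} y^n. -/

import Mathlib

open Filter Finset Topology

/-- The infinite `q`-Pochhammer symbol `(x;p)_∞ = ∏_{k≥0} (1 - x p^k)`. -/
noncomputable def qPoch (x p : ℂ) : ℂ := ∏' k : ℕ, (1 - x * p ^ k)

lemma hasProd_zero_of_exists_eq_zero' {f : ℕ → ℂ} (h : ∃ k, f k = 0) : HasProd f 0 := by
  obtain ⟨k, hk⟩ := h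
  have key : ∀ s : Finset ℕ, {k} ⊆ s → ∏ i ∈ s, f i = 0 := fun s hs =>
    Finset.prod_eq_zero (hs (Finset.mem_singleton_self k)) hk
  refine Tendsto.congr' ?_ tendsto_const_nhds
  filter_upwards [Filter.eventually_ge_atTop ({k} : Finset ℕ)] with s hs
  exact (key s hs).symm

lemma multipliable_one_sub (z : ℂ) {p : ℝ} (hp0 : 0 ≤ p) (hp1 : p < 1) :
    Multipliable (fun k : ℕ => 1 - z * (p : ℂ) ^ k) := by
  by_cases hz : ∃ k, (1 - z * (p : ℂ) ^ k) = 0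
  · exact ⟨0, hasProd_zero_of_exists_eq_zero' hz⟩
  push_neg at hz
  have hsum : Summable (fun k : ℕ => Complex.log (1 - z * (p : ℂ) ^ k)) := by
    apply Summable.of_norm_bounded_eventually_nat (g := fun k => 3/2 * (‖z‖ * p ^ k))
    · exact (summable_geometric_of_lt_one hp0 hp1).mul_left _ |>.mul_left _
    · have hp : Tendsto (fun k : ℕ => ‖z‖ * p ^ k) atTop (𝓝 0) := by
        simpa using (tendsto_pow_atTop_nhds_zero_of_lt_one hp0 hp1).const_mul ‖z‖
      filter_upwards [hp.eventually_le_const (by norm_num : (0:ℝ) < 1/2)] with k hk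
      have : (1 : ℂ) - z * (p : ℂ) ^ k = 1 + (-(z * (p:ℂ)^k)) := by ring
      rw [this]
      have hnp : ‖((p:ℂ))^k‖ = p ^ k := by
        rw [← Complex.ofReal_pow, Complex.norm_real, Real.norm_eq_abs,
          abs_of_nonneg (pow_nonneg hp0 k)]
      have hb : ‖-(z * (p:ℂ)^k)‖ ≤ 1/2 := by
        rw [norm_neg, norm_mul, hnp]; exact hk
      calc ‖Complex.log (1 + -(z * (p:ℂ)^k))‖ ≤ 3/2 * ‖-(z * (p:ℂ)^k)‖ :=
            Complex.norm_log_one_add_half_le_self hb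
        _ = 3/2 * (‖z‖ * p ^ k) := by
            rw [norm_neg, norm_mul, hnp]
  refine ⟨Complex.exp (∑' k, Complex.log (1 - z * (p:ℂ)^k)), ?_⟩
  have h2 := hsum.hasSum.cexp
  have heq : (Complex.exp ∘ fun k : ℕ => Complex.log (1 - z * (p:ℂ)^k))
      = fun k : ℕ => 1 - z * (p:ℂ)^k := funext fun n => Complex.exp_log (hz n)
  rwa [heq] at h2

lemma tendsto_prod_qPoch (z : ℂ) {p : ℝ} (hp0 : 0 ≤ p) (hp1 : p < 1) :
    Tendsto (fun N => ∏ k ∈ Finset.range N, (1 - z * (p : ℂ) ^ k)) atTop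
      (𝓝 (qPoch z p)) :=
  (multipliable_one_sub z hp0 hp1).hasProd.tendsto_prod_nat

noncomputable def PP (p : ℝ) (n : ℕ) : ℝ := ∏ m ∈ Finset.range n, (1 - p ^ (m + 1))

noncomputable def Pinf (p : ℝ) : ℝ := ∏' k : ℕ, (1 - p ^ (k + 1))

section real
variable {p : ℝ} (hp0 : 0 < p) (hp1 : p < 1)
include hp0 hp1

lemma fac_pos (m : ℕ) : 0 < 1 - p ^ (m + 1) := by
  have h1 : p ^ (m + 1) < 1 := pow_lt_one₀ hp0.le hp1 (Nat.succ_ne_zero m)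
  linarith

lemma fac_lt_one (m : ℕ) : 1 - p ^ (m + 1) < 1 := by
  have : 0 < p ^ (m + 1) := pow_pos hp0 _
  linarith

omit hp0 hp1 in
lemma PP_succ (n : ℕ) : PP p (n + 1) = PP p n * (1 - p ^ (n + 1)) :=
  Finset.prod_range_succ _ _

lemma PP_pos (n : ℕ) : 0 < PP p n :=
  Finset.prod_pos fun m _ => fac_pos hp0 hp1 m

lemma PP_le_one (n : ℕ) : PP p n ≤ 1 := by
  apply Finset.prod_le_one
  · intro m _; exact (fac_pos hp0 hp1 m).le
  · intro m _; exact (fac_lt_one hp0 hp1 m).le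

lemma PP_anti : Antitone (PP p) := by
  apply antitone_nat_of_succ_le
  intro n
  rw [PP_succ]
  nth_rewrite 2 [← mul_one (PP p n)]
  exact mul_le_mul_of_nonneg_left (fac_lt_one hp0 hp1 n).le (PP_pos hp0 hp1 n).le

lemma summable_log_PP : Summable fun k : ℕ => Real.log (1 - p ^ (k + 1)) := by
  apply Summable.of_norm_bounded (g := fun k => (p / (1 - p)) * p ^ k)
  · exact (summable_geometric_of_lt_one hp0.le hp1).mul_left _
  intro k
  have hf := fac_pos hp0 hp1 k
  have hlog : Real.log (1 - p ^ (k + 1)) ≤ 0 :=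
    Real.log_nonpos (by linarith) (fac_lt_one hp0 hp1 k).le
  rw [Real.norm_eq_abs, abs_of_nonpos hlog, ← Real.log_inv]
  have h2 : Real.log ((1 - p ^ (k + 1))⁻¹) ≤ (1 - p ^ (k + 1))⁻¹ - 1 :=
    Real.log_le_sub_one_of_pos (by positivity)
  have h3 : (1 - p ^ (k + 1))⁻¹ - 1 = p ^ (k + 1) / (1 - p ^ (k + 1)) := by
    field_simp
    ring
  have h1p : (0:ℝ) < 1 - p := by linarith
  have h4 : p ^ (k + 1) / (1 - p ^ (k + 1)) ≤ p / (1 - p) * p ^ k := by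
    rw [div_le_iff₀ hf, pow_succ]
    have hle : 1 - p ≤ 1 - p ^ (k + 1) := by
      have : p ^ (k + 1) ≤ p := pow_le_of_le_one hp0.le hp1.le (Nat.succ_ne_zero k)
      linarith
    calc p ^ k * p = p / (1 - p) * p ^ k * (1 - p) := by
          field_simp
      _ ≤ p / (1 - p) * p ^ k * (1 - p ^ (k + 1)) := by
          apply mul_le_mul_of_nonneg_left hle
          exact mul_nonneg (div_nonneg hp0.le h1p.le) (pow_nonneg hp0.le k)
  linarith

lemma hasProd_PP : HasProd (fun k : ℕ => 1 - p ^ (k + 1))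
    (Real.exp (∑' k : ℕ, Real.log (1 - p ^ (k + 1)))) := by
  have h2 := (summable_log_PP hp0 hp1).hasSum.rexp
  have heq : (Real.exp ∘ fun k : ℕ => Real.log (1 - p ^ (k + 1)))
      = fun k : ℕ => 1 - p ^ (k + 1) :=
    funext fun n => Real.exp_log (fac_pos hp0 hp1 n)
  rwa [heq] at h2

lemma Pinf_pos : 0 < Pinf p := by
  rw [Pinf, (hasProd_PP hp0 hp1).tprod_eq]
  exact Real.exp_pos _

lemma tendsto_PP : Tendsto (PP p) atTop (𝓝 (Pinf p)) := by
  have := (hasProd_PP hp0 hp1).multipliable.hasProd.tendsto_prod_nat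
  rwa [← Pinf] at this

lemma Pinf_le_PP (n : ℕ) : Pinf p ≤ PP p n := by
  apply le_of_tendsto (tendsto_PP hp0 hp1)
  filter_upwards [Filter.eventually_ge_atTop n] with m hm
  exact PP_anti hp0 hp1 hm

end real
/-- Gaussian binomial coefficient (as a real number). -/
noncomputable def GB (p : ℝ) (N k : ℕ) : ℝ :=
  if k ≤ N then PP p N / (PP p k * PP p (N - k)) else 0

/-- Coefficient in the Gauss binomial theorem. -/
noncomputable def gg (p : ℝ) (N k : ℕ) : ℝ := p ^ (k.choose 2) * GB p N k

section gb
variable {p : ℝ} (hp0 : 0 < p) (hp1 : p < 1)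
include hp0 hp1

lemma PP_zero : PP p 0 = 1 := Finset.prod_range_zero _

lemma GB_zero (N : ℕ) : GB p N 0 = 1 := by
  rw [GB, if_pos (Nat.zero_le N)]
  rw [PP_zero hp0 hp1, Nat.sub_zero, one_mul, div_self (PP_pos hp0 hp1 N).ne']

lemma GB_self (N : ℕ) : GB p N N = 1 := by
  rw [GB, if_pos le_rfl, Nat.sub_self, PP_zero hp0 hp1, mul_one,
    div_self (PP_pos hp0 hp1 N).ne']

lemma GB_of_gt {N k : ℕ} (h : N < k) : GB p N k = 0 := by
  rw [GB, if_neg (not_le.mpr h)]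

lemma GB_pascal (j e : ℕ) :
    GB p (j + e + 1) (j + 1) = GB p (j + e) (j + 1) + p ^ e * GB p (j + e) j := by
  rcases e with _ | f
  · simp only [Nat.add_zero, pow_zero, one_mul, GB_self hp0 hp1,
      GB_of_gt hp0 hp1 (Nat.lt_succ_self j)]
    ring
  · have h1 : j + 1 ≤ j + (f + 1) + 1 := by omega
    have h2 : j + 1 ≤ j + (f + 1) := by omega
    have h3 : j ≤ j + (f + 1) := by omega
    rw [GB, GB, GB, if_pos h1, if_pos h2, if_pos h3]
    have e1 : j + (f + 1) + 1 - (j + 1) = f + 1 := by omega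
    have e2 : j + (f + 1) - (j + 1) = f := by omega
    have e3 : j + (f + 1) - j = f + 1 := by omega
    rw [e1, e2, e3]
    have hPjf2 : PP p (j + (f + 1) + 1) = PP p (j + f + 1) * (1 - p ^ (j + f + 2)) := by
      have : j + (f + 1) + 1 = (j + f + 1) + 1 := by omega
      rw [this, PP_succ]
    have hPjf1 : PP p (j + (f + 1)) = PP p (j + f) * (1 - p ^ (j + f + 1)) := by
      have : j + (f + 1) = (j + f) + 1 := by omega
      rw [this, PP_succ]
    have hPf1 : PP p (f + 1) = PP p f * (1 - p ^ (f + 1)) := PP_succ _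
    have hPj1 : PP p (j + 1) = PP p j * (1 - p ^ (j + 1)) := PP_succ _
    have n1 := (PP_pos hp0 hp1 (j + 1)).ne'
    have n2 := (PP_pos hp0 hp1 (f + 1)).ne'
    have n3 := (PP_pos hp0 hp1 j).ne'
    have n4 := (PP_pos hp0 hp1 f).ne'
    have n5 := (fac_pos hp0 hp1 (j + f + 1)).ne'
    have n6 := (fac_pos hp0 hp1 f).ne'
    have n7 := (fac_pos hp0 hp1 j).ne'
    rw [hPjf2, hPjf1, hPf1, hPj1]
    have hjf : PP p (j + f + 1) = PP p (j + f) * (1 - p ^ (j + f + 1)) := PP_succ _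
    rw [hjf]
    field_simp
    ring
end gb

section gauss
variable {p : ℝ} (hp0 : 0 < p) (hp1 : p < 1)
include hp0 hp1

lemma gg_zero (N : ℕ) : gg p N 0 = 1 := by
  rw [gg, GB_zero hp0 hp1]; simp

lemma gg_top (N : ℕ) : gg p N (N + 1) = 0 := by
  rw [gg, GB_of_gt hp0 hp1 (Nat.lt_succ_self N), mul_zero]

lemma gg_pascal {j N : ℕ} (hjN : j ≤ N) :
    gg p (N + 1) (j + 1) = gg p N (j + 1) + p ^ N * gg p N j := by
  obtain ⟨e, rfl⟩ := Nat.exists_eq_add_of_le hjN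
  rw [gg, gg, gg, GB_pascal hp0 hp1]
  have hc : (j + 1).choose 2 = j.choose 2 + j := by
    rw [show (2:ℕ) = 1 + 1 from rfl, Nat.choose_succ_succ, Nat.choose_one_right]
    ring
  rw [hc, pow_add, pow_add]
  ring

lemma gauss (z : ℂ) (N : ℕ) :
    ∏ j ∈ Finset.range N, (1 + z * (p : ℂ) ^ j)
      = ∑ k ∈ Finset.range (N + 1), ((gg p N k : ℝ) : ℂ) * z ^ k := by
  induction N with
  | zero => simp [gg_zero hp0 hp1]
  | succ N ih =>
    rw [Finset.prod_range_succ, ih]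
    rw [Finset.sum_range_succ' (fun k => ((gg p (N + 1) k : ℝ) : ℂ) * z ^ k) (N + 1)]
    have hstep : ∀ i ∈ Finset.range (N + 1),
        ((gg p (N + 1) (i + 1) : ℝ) : ℂ) * z ^ (i + 1)
          = ((gg p N (i + 1) : ℝ) : ℂ) * z ^ (i + 1)
            + (p : ℂ) ^ N * z * (((gg p N i : ℝ) : ℂ) * z ^ i) := by
      intro i hi
      rw [gg_pascal hp0 hp1 (Nat.lt_succ_iff.mp (Finset.mem_range.mp hi))]
      push_cast
      ring
    rw [Finset.sum_congr rfl hstep, Finset.sum_add_distrib, ← Finset.mul_sum]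
    have h1 : ∑ i ∈ Finset.range (N + 1), ((gg p N (i + 1) : ℝ) : ℂ) * z ^ (i + 1)
        = (∑ k ∈ Finset.range (N + 2), ((gg p N k : ℝ) : ℂ) * z ^ k)
          - ((gg p N 0 : ℝ) : ℂ) * z ^ 0 := by
      rw [Finset.sum_range_succ' (fun k => ((gg p N k : ℝ) : ℂ) * z ^ k) (N + 1)]
      ring
    have h2 : ∑ k ∈ Finset.range (N + 2), ((gg p N k : ℝ) : ℂ) * z ^ k
        = ∑ k ∈ Finset.range (N + 1), ((gg p N k : ℝ) : ℂ) * z ^ k := by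
      rw [Finset.sum_range_succ, gg_top hp0 hp1]
      simp
    rw [h1, h2, gg_zero hp0 hp1, gg_zero hp0 hp1]
    push_cast
    ring

end gauss

lemma sum_odd (N : ℕ) : ∑ j ∈ Finset.range N, (2 * j + 1) = N ^ 2 := by
  induction N with
  | zero => simp
  | succ N ih =>
    rw [Finset.sum_range_succ, ih]
    have : (N + 1) ^ 2 = N ^ 2 + 2 * N + 1 := by ring
    omega

lemma choose_two (k : ℕ) : 2 * k.choose 2 + k = k ^ 2 := by
  induction k with
  | zero => simp
  | succ k ih =>
    have h : (k + 1).choose 2 = k.choose 2 + k := by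
      rw [show (2:ℕ) = 1 + 1 from rfl, Nat.choose_succ_succ, Nat.choose_one_right]
      ring
    have h2 : (k + 1) ^ 2 = k ^ 2 + 2 * k + 1 := by ring
    omega

lemma star (q : ℝ) (hq0 : 0 < q) (hq1 : q < 1) (x : ℂ) (hx : x ≠ 0) (N : ℕ) :
    ∏ m ∈ Finset.range N, ((1 + x * (q:ℂ) ^ (2*m+1)) * (1 + x⁻¹ * (q:ℂ) ^ (2*m+1)))
      = ∑ k ∈ Finset.range (2*N+1),
          ((GB (q^2) (2*N) k : ℝ) : ℂ) * ((q:ℂ) ^ (k^2+N^2) / (q:ℂ) ^ (2*N*k))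
            * (x ^ k / x ^ N) := by
  have hp0 : 0 < q ^ 2 := by positivity
  have hp1 : q ^ 2 < 1 := by nlinarith
  have hqc : (q:ℂ) ≠ 0 := by
    simpa using Complex.ofReal_ne_zero.mpr hq0.ne'
  have G := gauss hp0 hp1 (x * (q:ℂ) / (q:ℂ) ^ (2*N)) (2*N)
  push_cast at G
  have hL : ∏ j ∈ Finset.range (2*N), (1 + x * (q:ℂ) / (q:ℂ) ^ (2*N) * ((q:ℂ) ^ 2) ^ j)
      = (x ^ N / (q:ℂ) ^ (N^2)) *
        ∏ m ∈ Finset.range N, ((1 + x * (q:ℂ) ^ (2*m+1)) * (1 + x⁻¹ * (q:ℂ) ^ (2*m+1))) := by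
    set c := x * (q:ℂ) / (q:ℂ) ^ (2*N) with hc
    rw [two_mul, Finset.prod_range_add]
    have hB : ∏ j ∈ Finset.range N, (1 + c * ((q:ℂ)^2) ^ (N + j))
        = ∏ j ∈ Finset.range N, (1 + x * (q:ℂ) ^ (2*j+1)) := by
      apply Finset.prod_congr rfl
      intro j _
      have h1 : ((q:ℂ)^2) ^ (N + j) = (q:ℂ) ^ (2*N) * (q:ℂ) ^ (2*j) := by
        rw [← pow_mul, ← pow_add]
        congr 1
        ring
      rw [hc, h1]
      have h2 : x * (q:ℂ) / (q:ℂ) ^ (2*N) * ((q:ℂ) ^ (2*N) * (q:ℂ) ^ (2*j))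
          = x * (q:ℂ) ^ (2*j+1) := by
        field_simp
        ring
      rw [h2]
    have hA : ∏ j ∈ Finset.range N, (1 + c * ((q:ℂ)^2) ^ j)
        = ∏ j ∈ Finset.range N, ((x / (q:ℂ) ^ (2*j+1)) * (1 + x⁻¹ * (q:ℂ) ^ (2*j+1))) := by
      rw [← Finset.prod_range_reflect]
      apply Finset.prod_congr rfl
      intro j hj
      have hjN : j < N := Finset.mem_range.mp hj
      have hexp : ((q:ℂ)^2) ^ (N - 1 - j) * (q:ℂ) * (q:ℂ) ^ (2*j+1) = (q:ℂ) ^ (2*N) := by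
        rw [← pow_mul]
        have h3 : 2 * (N - 1 - j) + (2*j+1) + 1 = 2*N := by omega
        calc (q:ℂ) ^ (2*(N-1-j)) * (q:ℂ) * (q:ℂ) ^ (2*j+1)
            = (q:ℂ) ^ (2*(N-1-j) + (2*j+1) + 1) := by ring
          _ = (q:ℂ) ^ (2*N) := by rw [h3]
      have key : c * ((q:ℂ)^2) ^ (N - 1 - j)
          = x / (q:ℂ) ^ (2*j+1) := by
        rw [hc, div_mul_eq_mul_div, div_eq_div_iff (pow_ne_zero _ hqc) (pow_ne_zero _ hqc)]
        linear_combination x * hexp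
      rw [key]
      have hw : (q:ℂ) ^ (2*j+1) ≠ 0 := pow_ne_zero _ hqc
      field_simp
      ring
    rw [hA, hB, Finset.prod_mul_distrib]
    have hxprod : ∏ j ∈ Finset.range N, (x / (q:ℂ) ^ (2*j+1)) = x ^ N / (q:ℂ) ^ (N^2) := by
      rw [Finset.prod_div_distrib, Finset.prod_const, Finset.card_range,
        Finset.prod_pow_eq_pow_sum, sum_odd]
    rw [hxprod, Finset.prod_mul_distrib]
    ring
  rw [hL] at G
  have hR : ∀ k ∈ Finset.range (2*N+1),
      ((gg (q^2) (2*N) k : ℝ) : ℂ) * (x * (q:ℂ) / (q:ℂ) ^ (2*N)) ^ k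
        = (x ^ N / (q:ℂ) ^ (N^2)) *
          (((GB (q^2) (2*N) k : ℝ) : ℂ) * ((q:ℂ) ^ (k^2+N^2) / (q:ℂ) ^ (2*N*k))
            * (x ^ k / x ^ N)) := by
    intro k _
    rw [gg]
    push_cast
    have e1 : ((q:ℂ)^2) ^ (k.choose 2) * (q:ℂ) ^ k = (q:ℂ) ^ (k^2) := by
      rw [← pow_mul, ← pow_add, choose_two]
    have e2 : (q:ℂ) ^ (k^2+N^2) = (q:ℂ) ^ (k^2) * (q:ℂ) ^ (N^2) := pow_add _ _ _
    rw [e2, ← e1, div_pow, mul_pow, ← pow_mul]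
    field_simp
    ring
  rw [Finset.sum_congr rfl hR, ← Finset.mul_sum] at G
  exact mul_left_cancel₀ (div_ne_zero (pow_ne_zero _ hx) (pow_ne_zero _ hqc)) G

/-- The coefficient in the `N`-th approximant, as a function on `ℤ`. -/
noncomputable def DD (q : ℝ) (N : ℕ) (n : ℤ) : ℝ :=
  if n.natAbs ≤ N then PP (q^2) N * GB (q^2) (2*N) (n + N).toNat else 0

lemma tsum_FF (q : ℝ) (hq0 : 0 < q) (hq1 : q < 1) (x : ℂ) (hx : x ≠ 0) (N : ℕ) :
    ∑' n : ℤ, ((DD q N n : ℝ) : ℂ) * (q:ℂ) ^ (n^2) * x ^ n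
      = ((PP (q^2) N : ℝ) : ℂ) *
        ∏ m ∈ Finset.range N, ((1 + x * (q:ℂ) ^ (2*m+1)) * (1 + x⁻¹ * (q:ℂ) ^ (2*m+1))) := by
  have hqc : (q:ℂ) ≠ 0 := Complex.ofReal_ne_zero.mpr hq0.ne'
  rw [star q hq0 hq1 x hx N, Finset.mul_sum]
  rw [tsum_eq_sum (s := Finset.Icc (-(N:ℤ)) (N:ℤ))
    (f := fun n : ℤ => ((DD q N n : ℝ) : ℂ) * (q:ℂ) ^ (n^2) * x ^ n) ?_]
  · apply Finset.sum_nbij' (i := fun n : ℤ => (n + N).toNat) (j := fun k : ℕ => (k:ℤ) - N)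
    · intro n hn
      simp only [Finset.mem_Icc] at hn
      simp only [Finset.mem_range]
      omega
    · intro k hk
      simp only [Finset.mem_range] at hk
      simp only [Finset.mem_Icc]
      omega
    · intro n hn
      simp only [Finset.mem_Icc] at hn
      omega
    · intro k hk
      simp only [Finset.mem_range] at hk
      omega
    · intro n hn
      simp only [Finset.mem_Icc] at hn
      set k : ℕ := (n + N).toNat with hkdef
      have hk : (k : ℤ) = n + N := by omega
      have hDD : DD q N n = PP (q^2) N * GB (q^2) (2*N) k := by
        rw [DD, if_pos (by omega : n.natAbs ≤ N)]
      have hq2 : (q:ℂ) ^ (n^2) = (q:ℂ) ^ ((k^2 + N^2 : ℕ) : ℤ) / (q:ℂ) ^ ((2*N*k : ℕ) : ℤ) := by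
        rw [← zpow_sub₀ hqc]
        congr 1
        push_cast
        rw [hk]
        ring
      have hx2 : x ^ (n : ℤ) = x ^ ((k:ℕ):ℤ) / x ^ ((N:ℕ):ℤ) := by
        rw [← zpow_sub₀ hx]
        congr 1
        omega
      rw [hDD, hq2, hx2, zpow_natCast, zpow_natCast, zpow_natCast, zpow_natCast]
      push_cast
      ring
  · intro n hn
    simp only [Finset.mem_Icc] at hn
    have : DD q N n = 0 := by
      rw [DD, if_neg]
      omega
    simp [this]

section limits
variable {q : ℝ} (hq0 : 0 < q) (hq1 : q < 1)
include hq0 hq1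

lemma hp0' : 0 < q ^ 2 := by positivity
lemma hp1' : q ^ 2 < 1 := by nlinarith

lemma DD_nonneg (N : ℕ) (n : ℤ) : 0 ≤ DD q N n := by
  have hp0 := hp0' hq0 hq1; have hp1 := hp1' hq0 hq1
  rw [DD]
  split_ifs with h
  · rw [GB]
    split_ifs with h2
    · exact mul_nonneg (PP_pos hp0 hp1 _).le (div_nonneg (PP_pos hp0 hp1 _).le
        (mul_nonneg (PP_pos hp0 hp1 _).le (PP_pos hp0 hp1 _).le))
    · simp
  · exact le_refl 0

lemma DD_le (N : ℕ) (n : ℤ) : DD q N n ≤ (Pinf (q^2))⁻¹ * (Pinf (q^2))⁻¹ := by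
  have hp0 := hp0' hq0 hq1; have hp1 := hp1' hq0 hq1
  have hPinf := Pinf_pos hp0 hp1
  have hC : (0:ℝ) ≤ (Pinf (q^2))⁻¹ * (Pinf (q^2))⁻¹ := by positivity
  rw [DD]
  split_ifs with h
  · rw [GB]
    split_ifs with h2
    · rw [div_eq_mul_inv, mul_inv]
      have b1 : PP (q^2) N * PP (q^2) (2*N) ≤ 1 :=
        mul_le_one₀ (PP_le_one hp0 hp1 N) (PP_pos hp0 hp1 _).le (PP_le_one hp0 hp1 _)
      have b2 : (PP (q^2) ((n + N).toNat))⁻¹ ≤ (Pinf (q^2))⁻¹ :=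
        inv_anti₀ hPinf (Pinf_le_PP hp0 hp1 _)
      have b3 : (PP (q^2) (2*N - (n + N).toNat))⁻¹ ≤ (Pinf (q^2))⁻¹ :=
        inv_anti₀ hPinf (Pinf_le_PP hp0 hp1 _)
      calc PP (q^2) N * (PP (q^2) (2*N) * ((PP (q^2) ((n + N).toNat))⁻¹ *
              (PP (q^2) (2*N - (n + N).toNat))⁻¹))
          = (PP (q^2) N * PP (q^2) (2*N)) * ((PP (q^2) ((n + N).toNat))⁻¹ *
              (PP (q^2) (2*N - (n + N).toNat))⁻¹) := by ring
        _ ≤ 1 * ((Pinf (q^2))⁻¹ * (Pinf (q^2))⁻¹) := by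
            apply mul_le_mul b1
            · exact mul_le_mul b2 b3 (inv_nonneg.mpr (PP_pos hp0 hp1 _).le)
                (inv_nonneg.mpr hPinf.le)
            · exact mul_nonneg (inv_nonneg.mpr (PP_pos hp0 hp1 _).le)
                (inv_nonneg.mpr (PP_pos hp0 hp1 _).le)
            · norm_num
        _ = (Pinf (q^2))⁻¹ * (Pinf (q^2))⁻¹ := one_mul _
    · simpa using hC
  · exact hC

lemma norm_q_zpow_sq (n : ℤ) : ‖(q:ℂ) ^ (n^2)‖ = q ^ (n.natAbs^2) := by
  have h1 : (n^2 : ℤ) = ((n.natAbs^2 : ℕ) : ℤ) := by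
    rw [pow_two, pow_two]
    exact Int.natAbs_mul_self.symm
  rw [h1, zpow_natCast, norm_pow, Complex.norm_real, Real.norm_eq_abs, abs_of_pos hq0]

omit hq0 hq1 in
lemma norm_zpow_le_max {x : ℂ} (hx : x ≠ 0) (n : ℤ) :
    ‖x ^ n‖ ≤ (max ‖x‖ ‖x⁻¹‖) ^ n.natAbs := by
  rcases Int.eq_nat_or_neg n with ⟨m, rfl | rfl⟩
  · rw [zpow_natCast, Int.natAbs_natCast, norm_pow]
    exact pow_le_pow_left₀ (norm_nonneg x) (le_max_left _ _) m
  · rw [zpow_neg, ← inv_zpow, zpow_natCast, Int.natAbs_neg, Int.natAbs_natCast, norm_pow]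
    exact pow_le_pow_left₀ (norm_nonneg x⁻¹) (le_max_right _ _) m

lemma summable_bound (r C : ℝ) (hr : 0 ≤ r) (hC : 0 ≤ C) :
    Summable (fun n : ℤ => C * (q ^ (n.natAbs ^ 2) * r ^ n.natAbs)) := by
  have hnat : Summable (fun m : ℕ => C * (q ^ (m ^ 2) * r ^ m)) := by
    apply Summable.mul_left
    apply Summable.of_norm_bounded_eventually_nat (g := fun m => (1/2 : ℝ) ^ m)
    · exact summable_geometric_of_lt_one (by norm_num) (by norm_num)
    · have ht : Filter.Tendsto (fun m : ℕ => q ^ m * r) Filter.atTop (𝓝 0) := by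
        simpa using (tendsto_pow_atTop_nhds_zero_of_lt_one hq0.le hq1).mul_const r
      filter_upwards [ht.eventually_le_const (by norm_num : (0:ℝ) < 1/2)] with m hm
      have h1 : q ^ (m^2) * r ^ m = (q ^ m * r) ^ m := by
        rw [mul_pow, ← pow_mul, pow_two]
      rw [Real.norm_eq_abs, abs_of_nonneg (by positivity), h1]
      exact pow_le_pow_left₀ (by positivity) hm m
  apply Summable.of_nat_of_neg
  · simpa using hnat
  · simpa using hnat

lemma DD_tendsto (n : ℤ) : Filter.Tendsto (fun N => DD q N n) Filter.atTop (𝓝 1) := by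
  have hp0 := hp0' hq0 hq1; have hp1 := hp1' hq0 hq1
  have hPinf := Pinf_pos hp0 hp1
  have heq : ∀ᶠ N in Filter.atTop, (fun N => PP (q^2) N * PP (q^2) (2*N) /
      (PP (q^2) (n + N).toNat * PP (q^2) ((N:ℤ) - n).toNat)) N = DD q N n := by
    filter_upwards [Filter.eventually_ge_atTop n.natAbs] with N hN
    rw [DD, if_pos hN, GB, if_pos (by omega : (n + (N:ℤ)).toNat ≤ 2*N)]
    have h2 : 2*N - (n + (N:ℤ)).toNat = ((N:ℤ) - n).toNat := by omega
    rw [h2]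
    ring
  have t1 := tendsto_PP hp0 hp1
  have t2 : Filter.Tendsto (fun N : ℕ => PP (q^2) (2*N)) Filter.atTop (𝓝 (Pinf (q^2))) :=
    t1.comp (Filter.tendsto_atTop_mono (fun N => by simp only [id_eq]; omega)
      Filter.tendsto_id)
  have t3 : Filter.Tendsto (fun N : ℕ => PP (q^2) (n + (N:ℤ)).toNat) Filter.atTop
      (𝓝 (Pinf (q^2))) :=
    t1.comp (Filter.tendsto_atTop_mono (fun N => by omega : ∀ N : ℕ, N - n.natAbs ≤ (n + (N:ℤ)).toNat)
      (tendsto_sub_atTop_nat n.natAbs))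
  have t4 : Filter.Tendsto (fun N : ℕ => PP (q^2) ((N:ℤ) - n).toNat) Filter.atTop
      (𝓝 (Pinf (q^2))) :=
    t1.comp (Filter.tendsto_atTop_mono (fun N => by omega : ∀ N : ℕ, N - n.natAbs ≤ ((N:ℤ) - n).toNat)
      (tendsto_sub_atTop_nat n.natAbs))
  have hmain := (t1.mul t2).div (t3.mul t4) (by positivity)
  rw [div_self (by positivity : Pinf (q^2) * Pinf (q^2) ≠ 0)] at hmain
  exact hmain.congr' heq

end limits

/-- Jacobi triple product: for `0 < q < 1` and `y ≠ 0`,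
`(q²;q²)_∞ (qy;q²)_∞ (q/y;q²)_∞ = ∑_{n∈ℤ} (-1)^n q^{n²} y^n`. -/
theorem jacobi_triple_product (q : ℝ) (hq0 : 0 < q) (hq1 : q < 1) (y : ℂ) (hy : y ≠ 0) :
    qPoch ((q : ℂ) ^ 2) ((q : ℂ) ^ 2) * qPoch ((q : ℂ) * y) ((q : ℂ) ^ 2)
        * qPoch ((q : ℂ) / y) ((q : ℂ) ^ 2)
      = ∑' n : ℤ, (-1 : ℂ) ^ n * (q : ℂ) ^ (n ^ 2) * y ^ n := by
  have hqc : (q:ℂ) ≠ 0 := Complex.ofReal_ne_zero.mpr hq0.ne'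
  have hp0 : 0 < q ^ 2 := by positivity
  have hp1 : q ^ 2 < 1 := by nlinarith
  have hc : ((q^2 : ℝ) : ℂ) = (q:ℂ) ^ 2 := by push_cast; ring
  set x : ℂ := -y with hxdef
  have hx : x ≠ 0 := neg_ne_zero.mpr hy
  set r : ℝ := max ‖x‖ ‖x⁻¹‖ with hrdef
  have hr0 : 0 ≤ r := le_trans (norm_nonneg x) (le_max_left _ _)
  set C : ℝ := (Pinf (q^2))⁻¹ * (Pinf (q^2))⁻¹ with hCdef
  have hC0 : 0 ≤ C := mul_nonneg (inv_nonneg.mpr (Pinf_pos hp0 hp1).le)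
    (inv_nonneg.mpr (Pinf_pos hp0 hp1).le)
  -- Tannery: the tsum approximants converge to the bilateral series
  have hTan : Filter.Tendsto (fun N => ∑' n : ℤ, ((DD q N n : ℝ):ℂ) * (q:ℂ) ^ (n^2) * x ^ n)
      Filter.atTop (𝓝 (∑' n : ℤ, (q:ℂ) ^ (n^2) * x ^ n)) := by
    apply tendsto_tsum_of_dominated_convergence
      (bound := fun n : ℤ => C * (q ^ (n.natAbs ^ 2) * r ^ n.natAbs))
    · exact summable_bound hq0 hq1 r C hr0 hC0
    · intro n
      have h1 := DD_tendsto hq0 hq1 n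
      have h2 := ((Complex.continuous_ofReal.tendsto 1).comp h1).mul_const
        ((q:ℂ) ^ (n^2) * x ^ n)
      simp only [Function.comp_def, Complex.ofReal_one, one_mul] at h2
      exact h2.congr (fun N => by ring)
    · apply Filter.Eventually.of_forall
      intro N n
      have hbq : (0:ℝ) ≤ q ^ (n.natAbs ^ 2) := pow_nonneg hq0.le _
      rw [norm_mul, norm_mul, Complex.norm_real, norm_q_zpow_sq hq0 hq1 n, Real.norm_eq_abs,
        abs_of_nonneg (DD_nonneg hq0 hq1 N n)]
      calc DD q N n * q ^ (n.natAbs ^ 2) * ‖x ^ n‖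
          ≤ C * q ^ (n.natAbs ^ 2) * r ^ n.natAbs := by
            exact mul_le_mul (mul_le_mul (DD_le hq0 hq1 N n) le_rfl hbq hC0)
              (norm_zpow_le_max hx n) (norm_nonneg _) (mul_nonneg hC0 hbq)
        _ = C * (q ^ (n.natAbs ^ 2) * r ^ n.natAbs) := by ring
  -- identify approximants with partial products
  have hseq : ∀ N : ℕ, ∑' n : ℤ, ((DD q N n : ℝ):ℂ) * (q:ℂ) ^ (n^2) * x ^ n
      = ((PP (q^2) N : ℝ):ℂ) * (∏ m ∈ Finset.range N, (1 + x * (q:ℂ) ^ (2*m+1)))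
          * (∏ m ∈ Finset.range N, (1 + x⁻¹ * (q:ℂ) ^ (2*m+1))) := by
    intro N
    rw [tsum_FF q hq0 hq1 x hx N, Finset.prod_mul_distrib, ← mul_assoc]
  -- limits of each partial product
  have tP : Filter.Tendsto (fun N => ((PP (q^2) N : ℝ):ℂ)) Filter.atTop
      (𝓝 (qPoch ((q:ℂ)^2) ((q:ℂ)^2))) := by
    have h := tendsto_prod_qPoch ((q^2 : ℝ):ℂ) hp0.le hp1
    rw [hc] at h
    have hPP : ∀ N : ℕ, ∏ k ∈ Finset.range N, (1 - (q:ℂ)^2 * ((q:ℂ)^2) ^ k)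
        = ((PP (q^2) N : ℝ):ℂ) := by
      intro N
      rw [PP]
      push_cast
      exact Finset.prod_congr rfl fun m _ => by ring
    exact h.congr hPP
  have tA : Filter.Tendsto (fun N => ∏ m ∈ Finset.range N, (1 + x * (q:ℂ) ^ (2*m+1)))
      Filter.atTop (𝓝 (qPoch ((q:ℂ) * y) ((q:ℂ)^2))) := by
    have h := tendsto_prod_qPoch ((q:ℂ) * y) hp0.le hp1
    rw [hc] at h
    refine h.congr fun N => Finset.prod_congr rfl fun m _ => ?_
    have he : ((q:ℂ)^2) ^ m * (q:ℂ) = (q:ℂ) ^ (2*m+1) := by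
      rw [← pow_mul, ← pow_succ]
    rw [hxdef, ← he]
    ring
  have tB : Filter.Tendsto (fun N => ∏ m ∈ Finset.range N, (1 + x⁻¹ * (q:ℂ) ^ (2*m+1)))
      Filter.atTop (𝓝 (qPoch ((q:ℂ) / y) ((q:ℂ)^2))) := by
    have h := tendsto_prod_qPoch ((q:ℂ) / y) hp0.le hp1
    rw [hc] at h
    refine h.congr fun N => Finset.prod_congr rfl fun m _ => ?_
    have he : ((q:ℂ)^2) ^ m * (q:ℂ) = (q:ℂ) ^ (2*m+1) := by
      rw [← pow_mul, ← pow_succ]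
    rw [hxdef, inv_neg, ← he]
    field_simp
    ring
  have hlim2 := (tP.mul tA).mul tB
  have hTan' := hTan.congr hseq
  have hkey := tendsto_nhds_unique hTan' hlim2
  rw [← hkey]
  apply tsum_congr
  intro n
  rw [hxdef, show -y = (-1 : ℂ) * y from (neg_one_mul y).symm, mul_zpow]
  ring
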